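/- Time Lipschitz Continuous Belief (Lemma 1): If the transition kernel T is L_T-time-Lipschitz, then for every Δ ∈ ℕ, every initial state s₀ ∈ S, and every action sequence a₀, …, a_{Δ-1} ∈ A, the function s' ↦ dist(s', s₀) is integrable with respect to the belief measure b and ∫ dist(s', s₀) db(s') ≤ Δ · L_T. (Since the L1-Wasserstein distance between a measure and a Dirac measure δ_{s₀} equals the expected distance to s₀, this says W₁(b, δ_{s₀}) ≤ Δ · L_T.) -/

import Mathlib

open MeasureTheory ProbabilityTheory
open scoped ENNReal NNReal

/-- The belief measure obtained by iterated composition of the transition kernel: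
`μ₀ = δ_{s₀}` and `μ_{i+1} = μ_i.bind (s ↦ T (s, aᵢ))`. -/
noncomputable def beliefMeasure {S A : Type*} [MeasurableSpace S] [MeasurableSpace A]
    (T : Kernel (S × A) S) (s₀ : S) :
    (Δ : ℕ) → (Fin Δ → A) → Measure S
  | 0, _ => Measure.dirac s₀
  | (Δ + 1), a =>
      (beliefMeasure T s₀ Δ (fun i => a i.castSucc)).bind (fun s => T (s, a (Fin.last Δ)))

private lemma belief_aux
    {S A : Type*} [MetricSpace S] [MeasurableSpace S] [BorelSpace S]
    [MetricSpace A] [MeasurableSpace A] [BorelSpace A]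
    (T : Kernel (S × A) S) [IsMarkovKernel T]
    (L_T : ℝ)
    (hT : ∀ (s : S) (a : A),
      Integrable (fun s' => dist s' s) (T (s, a)) ∧
      ∫ s', dist s' s ∂(T (s, a)) ≤ L_T)
    (s₀ : S) :
    ∀ (Δ : ℕ) (a : Fin Δ → A),
      (beliefMeasure T s₀ Δ a) Set.univ = 1 ∧
      ∫⁻ s', edist s' s₀ ∂(beliefMeasure T s₀ Δ a) ≤ (Δ : ℝ≥0∞) * ENNReal.ofReal L_T := by
  intro Δ
  induction Δ with
  | zero =>
    intro a
    constructor
    · simp [beliefMeasure]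
    · simp [beliefMeasure, lintegral_dirac]
  | succ Δ ih =>
    intro a
    set μ := beliefMeasure T s₀ Δ (fun i => a i.castSucc) with hμdef
    obtain ⟨huniv, hint⟩ := ih (fun i => a i.castSucc)
    have hκ : Measurable (fun s : S => T (s, a (Fin.last Δ))) :=
      T.measurable.comp (measurable_id.prodMk measurable_const)
    have hbind : beliefMeasure T s₀ (Δ + 1) a =
        μ.bind (fun s => T (s, a (Fin.last Δ))) := rfl
    have hedist : Measurable (fun s' : S => edist s' s₀) :=
      (continuous_edist.comp (Continuous.prodMk continuous_id continuous_const)).measurable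
    have hinner : ∀ s : S,
        ∫⁻ s', edist s' s₀ ∂(T (s, a (Fin.last Δ))) ≤ ENNReal.ofReal L_T + edist s s₀ := by
      intro s
      obtain ⟨hi, hb⟩ := hT s (a (Fin.last Δ))
      have h1 : ∫⁻ s', ENNReal.ofReal (dist s' s) ∂(T (s, a (Fin.last Δ)))
          ≤ ENNReal.ofReal L_T := by
        rw [← ofReal_integral_eq_lintegral_ofReal hi
          (Filter.Eventually.of_forall fun s' => dist_nonneg)]
        exact ENNReal.ofReal_le_ofReal hb
      calc ∫⁻ s', edist s' s₀ ∂(T (s, a (Fin.last Δ)))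
          ≤ ∫⁻ s', (edist s' s + edist s s₀) ∂(T (s, a (Fin.last Δ))) := by
            apply lintegral_mono
            intro s'
            exact edist_triangle s' s s₀
        _ = (∫⁻ s', edist s' s ∂(T (s, a (Fin.last Δ)))) + edist s s₀ := by
            rw [lintegral_add_right _ measurable_const, lintegral_const,
              measure_univ, mul_one]
        _ ≤ ENNReal.ofReal L_T + edist s s₀ := by
            gcongr
            simpa only [edist_dist] using h1
    constructor
    · rw [hbind, Measure.bind_apply MeasurableSet.univ hκ.aemeasurable]
      simp only [measure_univ]
      rw [lintegral_one, huniv]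
    · rw [hbind, Measure.lintegral_bind hκ.aemeasurable hedist.aemeasurable]
      calc ∫⁻ s, ∫⁻ s', edist s' s₀ ∂(T (s, a (Fin.last Δ))) ∂μ
          ≤ ∫⁻ s, (ENNReal.ofReal L_T + edist s s₀) ∂μ := lintegral_mono hinner
        _ = ENNReal.ofReal L_T * μ Set.univ + ∫⁻ s, edist s s₀ ∂μ := by
            rw [lintegral_add_left measurable_const, lintegral_const]
        _ ≤ ENNReal.ofReal L_T + (Δ : ℝ≥0∞) * ENNReal.ofReal L_T := by
            rw [huniv, mul_one]
            gcongr
        _ = ((Δ + 1 : ℕ) : ℝ≥0∞) * ENNReal.ofReal L_T := by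
            push_cast
            ring

/-- **Time Lipschitz Continuous Belief (Lemma 1).**
If the transition kernel `T` is `L_T`-time-Lipschitz, then for every `Δ ∈ ℕ`, every initial
state `s₀` and every action sequence `a₀, …, a_{Δ-1}`, the function `s' ↦ dist s' s₀` is
integrable with respect to the belief measure `b` and `∫ dist s' s₀ ∂b ≤ Δ * L_T`. -/
theorem belief_time_lipschitz
    {S A : Type*} [MetricSpace S] [MeasurableSpace S] [BorelSpace S]
    [MetricSpace A] [MeasurableSpace A] [BorelSpace A]
    (T : Kernel (S × A) S) [IsMarkovKernel T]
    (L_T : ℝ) (hL : 0 ≤ L_T)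
    (hT : ∀ (s : S) (a : A),
      Integrable (fun s' => dist s' s) (T (s, a)) ∧
      ∫ s', dist s' s ∂(T (s, a)) ≤ L_T)
    (Δ : ℕ) (s₀ : S) (a : Fin Δ → A) :
    Integrable (fun s' => dist s' s₀) (beliefMeasure T s₀ Δ a) ∧
      ∫ s', dist s' s₀ ∂(beliefMeasure T s₀ Δ a) ≤ (Δ : ℝ) * L_T := by
  obtain ⟨huniv, hlin⟩ := belief_aux T L_T hT s₀ Δ a
  set b := beliefMeasure T s₀ Δ a
  have hmeas : Measurable (fun s' : S => dist s' s₀) :=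
    (continuous_dist.comp (Continuous.prodMk continuous_id continuous_const)).measurable
  have hedist : ∀ s' : S, (‖dist s' s₀‖₊ : ℝ≥0∞) = edist s' s₀ := by
    intro s'
    rw [edist_dist, ← enorm_eq_nnnorm, ← ofReal_norm, Real.norm_of_nonneg dist_nonneg]
  have htop : (Δ : ℝ≥0∞) * ENNReal.ofReal L_T ≠ ⊤ :=
    ENNReal.mul_ne_top (ENNReal.natCast_ne_top Δ) ENNReal.ofReal_ne_top
  have hint : Integrable (fun s' => dist s' s₀) b := by
    refine ⟨hmeas.aestronglyMeasurable, ?_⟩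
    rw [HasFiniteIntegral]
    calc ∫⁻ s', (‖dist s' s₀‖₊ : ℝ≥0∞) ∂b = ∫⁻ s', edist s' s₀ ∂b := by
          simp_rw [hedist]
      _ ≤ (Δ : ℝ≥0∞) * ENNReal.ofReal L_T := hlin
      _ < ⊤ := lt_top_iff_ne_top.mpr htop
  refine ⟨hint, ?_⟩
  rw [integral_eq_lintegral_of_nonneg_ae
    (Filter.Eventually.of_forall fun s' => dist_nonneg) hmeas.aestronglyMeasurable]
  have : ∫⁻ s', ENNReal.ofReal (dist s' s₀) ∂b ≤ (Δ : ℝ≥0∞) * ENNReal.ofReal L_T := by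
    simpa only [← edist_dist] using hlin
  calc (∫⁻ s', ENNReal.ofReal (dist s' s₀) ∂b).toReal
      ≤ ((Δ : ℝ≥0∞) * ENNReal.ofReal L_T).toReal := ENNReal.toReal_mono htop this
    _ = (Δ : ℝ) * L_T := by
        rw [ENNReal.toReal_mul, ENNReal.toReal_natCast, ENNReal.toReal_ofReal hL]
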